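/- Let p₀ < p₁ < 0, g⟦ρ⟧ < 0, and let Γ : [p₁,0] → (0,∞) be continuous. Suppose the size condition g⟦ρ⟧·p₁² + ∫_{p₁}^0 (Γ(p)³ + p²Γ(p)) dp < 0 holds. Then there exist λ > 0 and a function φ : [p₀,0] → ℝ, continuous, continuously differentiable on [p₀,p₁] and on [p₁,0], with φ(p₀) = φ(0) = 0 and φ not identically zero, such that g⟦ρ⟧·φ(p₁)² + ∫_{p₀}^{p₁} λ³ φ′(p)² dp + ∫_{p₁}^0 Γ(p)³ φ′(p)² dp < −(∫_{p₀}^{p₁} λ φ(p)² dp + ∫_{p₁}^0 Γ(p) φ(p)² dp); that is, the Rayleigh quotient ℛ(φ;λ) is strictly less than −1, so the local bifurcation condition inf_{λ>0} ν(λ) < −1 holds. -/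

import Mathlib

open Set intervalIntegral

/-- **The size condition implies the local bifurcation condition.**
Let `p₀ < p₁ < 0`, `gρ < 0`, and let `Γ : [p₁,0] → (0,∞)` be continuous with
`gρ·p₁² + ∫_{p₁}^0 (Γ³ + p²Γ) dp < 0`.  Then there exist `λ > 0` and an
admissible `φ` (continuous on `[p₀,0]`, `C¹` on `[p₀,p₁]` and on `[p₁,0]`,
vanishing at `p₀` and `0`, not identically zero) whose Rayleigh quotient at `λ`
is strictly less than `−1`; hence `inf_{λ>0} ν(λ) < −1`. -/
theorem stmt_11 (p₀ p₁ gρ : ℝ) (h₀₁ : p₀ < p₁) (h₁ : p₁ < 0) (hgρ : gρ < 0)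
    (Γ : ℝ → ℝ) (hΓpos : ∀ p ∈ Set.Icc p₁ 0, 0 < Γ p)
    (hΓcont : ContinuousOn Γ (Set.Icc p₁ 0))
    (hsize : gρ * p₁ ^ 2 + (∫ p in p₁..(0 : ℝ), (Γ p ^ 3 + p ^ 2 * Γ p)) < 0) :
    ∃ lam > (0 : ℝ), ∃ φ : ℝ → ℝ,
      ContinuousOn φ (Set.Icc p₀ 0) ∧
      ContDiffOn ℝ 1 φ (Set.Icc p₀ p₁) ∧
      ContDiffOn ℝ 1 φ (Set.Icc p₁ 0) ∧
      φ p₀ = 0 ∧ φ 0 = 0 ∧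
      ¬(∀ p ∈ Set.Icc p₀ 0, φ p = 0) ∧
      gρ * φ p₁ ^ 2 + (∫ p in p₀..p₁, lam ^ 3 * deriv φ p ^ 2)
          + (∫ p in p₁..(0 : ℝ), Γ p ^ 3 * deriv φ p ^ 2)
        < -((∫ p in p₀..p₁, lam * φ p ^ 2) + ∫ p in p₁..(0 : ℝ), Γ p * φ p ^ 2) := by
  have hd : (0:ℝ) < p₁ - p₀ := by linarith
  set c : ℝ := p₁ / (p₁ - p₀) with hc
  set φ : ℝ → ℝ := fun p => if p ≤ p₁ then c * (p - p₀) else p with hφ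
  -- basic values
  have hφp₁ : φ p₁ = p₁ := by
    show (if p₁ ≤ p₁ then c * (p₁ - p₀) else p₁) = p₁
    rw [if_pos le_rfl, hc]
    field_simp
  have hφ0 : φ 0 = 0 := by simp [hφ, not_le.mpr h₁]
  have hφp₀ : φ p₀ = 0 := by simp [hφ, h₀₁.le]
  -- equality on pieces
  have hEqL : EqOn φ (fun p => c * (p - p₀)) (Icc p₀ p₁) := fun p hp => by
    simp [hφ, hp.2]
  have hEqR : EqOn φ id (Icc p₁ 0) := fun p hp => by
    rcases eq_or_lt_of_le hp.1 with h | h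
    · simpa [← h] using hφp₁
    · simp [hφ, not_le.mpr h]
  -- derivative on pieces
  have hderivL : ∀ p ∈ Ioo p₀ p₁, deriv φ p = c := by
    intro p hp
    have hmem : Iio p₁ ∈ nhds p := Iio_mem_nhds hp.2
    have hev : φ =ᶠ[nhds p] fun q => c * (q - p₀) :=
      Filter.eventuallyEq_of_mem hmem (fun q hq => by simp [hφ, (mem_Iio.mp hq).le])
    rw [Filter.EventuallyEq.deriv_eq hev]
    have : HasDerivAt (fun q : ℝ => c * (q - p₀)) (c * 1) p :=
      ((hasDerivAt_id p).sub_const p₀).const_mul c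
    simpa using this.deriv
  have hderivR : ∀ p ∈ Ioc p₁ (0:ℝ), deriv φ p = 1 := by
    intro p hp
    have hmem : Ioi p₁ ∈ nhds p := Ioi_mem_nhds hp.1
    have hev : φ =ᶠ[nhds p] id :=
      Filter.eventuallyEq_of_mem hmem (fun q hq => by simp [hφ, not_le.mpr (mem_Ioi.mp hq)])
    rw [Filter.EventuallyEq.deriv_eq hev, deriv_id]
  -- integrability pieces for Γ
  have hIcc : uIcc p₁ (0:ℝ) = Icc p₁ 0 := uIcc_of_le h₁.le
  have hInt3 : IntervalIntegrable (fun p => Γ p ^ 3) MeasureTheory.volume p₁ 0 := by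
    apply ContinuousOn.intervalIntegrable
    rw [hIcc]; exact hΓcont.pow 3
  have hInt2 : IntervalIntegrable (fun p => p ^ 2 * Γ p) MeasureTheory.volume p₁ 0 := by
    apply ContinuousOn.intervalIntegrable
    rw [hIcc]; exact (continuousOn_id.pow 2).mul hΓcont
  have hsplit : (∫ p in p₁..(0:ℝ), (Γ p ^ 3 + p ^ 2 * Γ p))
      = (∫ p in p₁..(0:ℝ), Γ p ^ 3) + ∫ p in p₁..(0:ℝ), p ^ 2 * Γ p :=
    integral_add hInt3 hInt2
  set ε : ℝ := -(gρ * p₁ ^ 2 + (∫ p in p₁..(0:ℝ), Γ p ^ 3) + ∫ p in p₁..(0:ℝ), p ^ 2 * Γ p) with hε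
  have hεpos : 0 < ε := by
    have := hsize
    rw [hsplit] at this
    simp only [hε]; linarith
  set A : ℝ := p₁ ^ 2 / (p₁ - p₀) with hA
  set B : ℝ := p₁ ^ 2 * (p₁ - p₀) / 3 with hB
  have hp₁sq : (0:ℝ) < p₁ ^ 2 := by nlinarith
  have hApos : 0 < A := div_pos hp₁sq hd
  have hBpos : 0 < B := div_pos (mul_pos hp₁sq hd) three_pos
  set lam : ℝ := min 1 (ε / (2 * (A + B))) with hlam
  have hlampos : 0 < lam := lt_min one_pos (div_pos hεpos (by linarith))
  have hlam1 : lam ≤ 1 := min_le_left _ _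
  have hlamAB : lam * (A + B) ≤ ε / 2 := by
    have h2 : lam ≤ ε / (2 * (A + B)) := min_le_right _ _
    have hABpos : 0 < A + B := by linarith
    calc lam * (A + B) ≤ (ε / (2 * (A + B))) * (A + B) := by
          exact mul_le_mul_of_nonneg_right h2 hABpos.le
      _ = ε / 2 := by field_simp
  refine ⟨lam, hlampos, φ, ?_, ?_, ?_, hφp₀, hφ0, ?_, ?_⟩
  · -- continuity
    have : Continuous φ := by
      apply Continuous.if_le
      · exact (continuous_const.mul (continuous_id.sub continuous_const))
      · exact continuous_id
      · exact continuous_id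
      · exact continuous_const
      · intro a ha; subst ha; rw [hc]; field_simp
    exact this.continuousOn
  · exact ((contDiff_const.mul (contDiff_id.sub contDiff_const)).contDiffOn).congr
      fun p hp => hEqL hp
  · exact (contDiff_id.contDiffOn).congr fun p hp => hEqR hp
  · intro hall
    have := hall p₁ ⟨h₀₁.le, h₁.le⟩
    rw [hφp₁] at this; exact absurd this (ne_of_lt h₁)
  · -- the main inequality
    have hne : ∀ᵐ x : ℝ, x ≠ p₁ := by
      refine (MeasureTheory.ae_iff).mpr ?_
      simp
    have hI1 : (∫ p in p₀..p₁, lam ^ 3 * deriv φ p ^ 2) = lam ^ 3 * c ^ 2 * (p₁ - p₀) := by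
      rw [integral_congr_ae (g := fun _ => lam ^ 3 * c ^ 2) ?_]
      · simp [smul_eq_mul]; ring
      · filter_upwards [hne] with x hx hmem
        rw [uIoc_of_le h₀₁.le] at hmem
        have hxlt : x < p₁ := lt_of_le_of_ne hmem.2 hx
        rw [hderivL x ⟨hmem.1, hxlt⟩]
    have hI2 : (∫ p in p₀..p₁, lam * φ p ^ 2) = lam * c ^ 2 * (p₁ - p₀) ^ 3 / 3 := by
      rw [integral_congr (g := fun p => lam * (c * (p - p₀)) ^ 2) ?_]
      · have : (∫ p in p₀..p₁, lam * (c * (p - p₀)) ^ 2)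
            = lam * c ^ 2 * ∫ p in p₀..p₁, (p - p₀) ^ 2 := by
          rw [← integral_const_mul]
          congr 1; ext p; ring
        rw [this, integral_comp_sub_right (fun x => x ^ 2) p₀, integral_pow]
        simp; ring
      · intro p hp
        rw [uIcc_of_le h₀₁.le] at hp
        have := hEqL hp
        simp only [this]
    have hI3 : (∫ p in p₁..(0:ℝ), Γ p ^ 3 * deriv φ p ^ 2) = ∫ p in p₁..(0:ℝ), Γ p ^ 3 := by
      apply integral_congr_ae
      filter_upwards with x hmem
      rw [uIoc_of_le h₁.le] at hmem
      rw [hderivR x hmem]; ring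
    have hI4 : (∫ p in p₁..(0:ℝ), Γ p * φ p ^ 2) = ∫ p in p₁..(0:ℝ), p ^ 2 * Γ p := by
      apply integral_congr
      intro p hp
      rw [hIcc] at hp
      have := hEqR hp
      simp only [this, id_eq]; ring
    rw [hφp₁, hI1, hI2, hI3, hI4]
    have hcA : lam ^ 3 * c ^ 2 * (p₁ - p₀) = lam ^ 3 * A := by
      simp only [hc, hA]; field_simp
    have hcB : lam * c ^ 2 * (p₁ - p₀) ^ 3 / 3 = lam * B := by
      simp only [hc, hB]; field_simp
    rw [hcA, hcB]
    clear_value φ c lam ε A B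
    have hsq : lam ^ 2 ≤ 1 := by nlinarith
    have hcube : lam ^ 3 ≤ lam := by nlinarith [mul_le_mul_of_nonneg_left hsq hlampos.le]
    have h5 : lam ^ 3 * A ≤ lam * A := mul_le_mul_of_nonneg_right hcube hApos.le
    have h6 : lam ^ 3 * A + lam * B ≤ lam * (A + B) := by ring_nf; linarith [h5]
    have hfinal : lam ^ 3 * A + lam * B < ε := by linarith
    rw [hε] at hfinal
    linarith
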